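/- arXiv:1208.2789 — 6 statements merged into one kernel-verified Lean document; each statement's English description precedes it below -/
import Mathlib

section
/- Radial Hadamard variation formula. Let $I\subseteq\mathbb{R}$ be an interval, let $\xi : I \to \mathbb{C}$ satisfy $|\xi(t)| = 1$ for all $t$, and let $g_1, g_2 : I \to \mathbb{C}$ be differentiable functions with $|g_1(t)| < 1$, $|g_2(t)| < 1$ and $g_1(t)\ne g_2(t)$ for all $t$, satisfying the radial Loewner equation $g_j'(t) = g_j(t)\,\dfrac{\xi(t)+g_j(t)}{\xi(t)-g_j(t)}$ for $j = 1,2$. Then the function $t \mapsto \log\left|\dfrac{1-g_1(t)\overline{g_2(t)}}{g_1(t)-g_2(t)}\right|$ is differentiable with derivative $-\,\mathrm{Re}\,\dfrac{\xi(t)+g_1(t)}{\xi(t)-g_1(t)}\;\mathrm{Re}\,\dfrac{\xi(t)+g_2(t)}{\xi(t)-g_2(t)}$ at every $t\in I$. -/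
open Complex

lemma hasDerivAt_log_abs {f : ℝ → ℂ} {f' : ℂ} {t : ℝ}
    (hf : HasDerivAt f f' t) (h0 : f t ≠ 0) :
    HasDerivAt (fun s => Real.log (‖f s‖)) ((f' / f t).re) t := by
  have hre : HasDerivAt (fun s => (f s).re) f'.re t :=
    Complex.reCLM.hasFDerivAt.comp_hasDerivAt t hf
  have him : HasDerivAt (fun s => (f s).im) f'.im t :=
    Complex.imCLM.hasFDerivAt.comp_hasDerivAt t hf
  have hns : HasDerivAt (fun s => Complex.normSq (f s))
      (f'.re * (f t).re + (f t).re * f'.re + (f'.im * (f t).im + (f t).im * f'.im)) t := by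
    simpa [Complex.normSq_apply] using (hre.fun_mul hre).fun_add (him.fun_mul him)
  have hns0 : Complex.normSq (f t) ≠ 0 := (Complex.normSq_pos.2 h0).ne'
  have hlog := (hns.log hns0).div_const 2
  have heq : (fun s => Real.log (‖f s‖))
      = fun s => Real.log (Complex.normSq (f s)) / 2 := by
    funext s
    rw [Complex.norm_def, Real.log_sqrt (Complex.normSq_nonneg _)]
  rw [heq]
  refine hlog.congr_deriv ?_
  have h2 : (f t).re ^ 2 + (f t).im ^ 2 ≠ 0 := by
    simpa [Complex.normSq_apply, sq] using hns0
  rw [Complex.div_re, Complex.normSq_apply]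
  ring

set_option maxHeartbeats 1000000 in
lemma half_identity (x a b b' : ℂ)
    (hxa : x - a ≠ 0) (hxb : x - b ≠ 0) (hab : a - b ≠ 0)
    (hxb' : 1 - b' * x ≠ 0) (hN : 1 - a * b' ≠ 0) :
    -(a * ((x + a) / (x - a)) * b' + a * (b' * ((1 + b' * x) / (1 - b' * x)))) / (1 - a * b')
      - (a * ((x + a) / (x - a)) - b * ((x + b) / (x - b))) / (a - b)
    = -((((x + a) / (x - a)) + 1) * ((x + b) / (x - b))
        + (((x + a) / (x - a)) - 1) * ((1 + b' * x) / (1 - b' * x))) / 2 := by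
  have hxb'' : 1 - x * b' ≠ 0 := by rwa [mul_comm]
  field_simp
  ring

set_option maxHeartbeats 1000000 in
lemma half_identity' (x a' b b' : ℂ)
    (hxb : x - b ≠ 0) (hab' : a' - b' ≠ 0)
    (hxa' : 1 - a' * x ≠ 0) (hxb' : 1 - b' * x ≠ 0) (hM : 1 - a' * b ≠ 0) :
    -(a' * ((1 + a' * x) / (1 - a' * x)) * b + a' * (b * ((x + b) / (x - b)))) / (1 - a' * b)
      - (a' * ((1 + a' * x) / (1 - a' * x)) - b' * ((1 + b' * x) / (1 - b' * x))) / (a' - b')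
    = -((((1 + a' * x) / (1 - a' * x)) + 1) * ((1 + b' * x) / (1 - b' * x))
        + (((1 + a' * x) / (1 - a' * x)) - 1) * ((x + b) / (x - b))) / 2 := by
  have hxb'' : 1 - x * b' ≠ 0 := by rwa [mul_comm]
  have hxa'' : 1 - x * a' ≠ 0 := by rwa [mul_comm]
  field_simp
  ring

set_option maxHeartbeats 2000000 in
/-- Radial Hadamard variation formula: if `g₁, g₂` solve the radial
Loewner equation in the unit disc with driving function `ξ` on the unit circle and
never collide, then `t ↦ log |(1 - g₁(t) conj (g₂(t))) / (g₁(t) - g₂(t))|` is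
differentiable with derivative
`- Re((ξ+g₁)/(ξ-g₁)) · Re((ξ+g₂)/(ξ-g₂))`. -/
theorem radial_hadamard_variation (I : Set ℝ) (hI : I.OrdConnected)
    (ξ g₁ g₂ : ℝ → ℂ)
    (hξ : ∀ t ∈ I, ‖ξ t‖ = 1)
    (hg₁ : ∀ t ∈ I, ‖g₁ t‖ < 1)
    (hg₂ : ∀ t ∈ I, ‖g₂ t‖ < 1)
    (hne : ∀ t ∈ I, g₁ t ≠ g₂ t)
    (hd₁ : ∀ t ∈ I, HasDerivAt g₁ (g₁ t * ((ξ t + g₁ t) / (ξ t - g₁ t))) t)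
    (hd₂ : ∀ t ∈ I, HasDerivAt g₂ (g₂ t * ((ξ t + g₂ t) / (ξ t - g₂ t))) t) :
    ∀ t ∈ I,
      HasDerivAt
        (fun s => Real.log (‖
          ((1 - g₁ s * (starRingEnd ℂ) (g₂ s)) / (g₁ s - g₂ s))‖))
        (-(((ξ t + g₁ t) / (ξ t - g₁ t)).re * ((ξ t + g₂ t) / (ξ t - g₂ t)).re)) t := by
  intro t ht
  have hx1 : ‖ξ t‖ = 1 := hξ t ht
  have ha1 : ‖g₁ t‖ < 1 := hg₁ t ht
  have hb1 : ‖g₂ t‖ < 1 := hg₂ t ht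
  have hx0 : ξ t ≠ 0 := by
    intro h; rw [h] at hx1; simp at hx1
  have hxa : ξ t - g₁ t ≠ 0 := sub_ne_zero.2 (by
    intro h; rw [← h, hx1] at ha1; exact lt_irrefl _ ha1)
  have hxb : ξ t - g₂ t ≠ 0 := sub_ne_zero.2 (by
    intro h; rw [← h, hx1] at hb1; exact lt_irrefl _ hb1)
  have hab : g₁ t - g₂ t ≠ 0 := sub_ne_zero.2 (hne t ht)
  have hN0 : 1 - g₁ t * (starRingEnd ℂ) (g₂ t) ≠ 0 := by
    intro h
    have h1 : g₁ t * (starRingEnd ℂ) (g₂ t) = 1 := by linear_combination -h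
    have habs := congrArg (‖·‖) h1
    rw [norm_mul, Complex.norm_conj, norm_one] at habs
    nlinarith [norm_nonneg (g₁ t), norm_nonneg (g₂ t)]
  -- conjugate-side facts
  have hxx : ξ t * (starRingEnd ℂ) (ξ t) = 1 := by
    rw [Complex.mul_conj, Complex.normSq_eq_norm_sq, hx1]
    norm_num
  have hy : (starRingEnd ℂ) (ξ t) = (ξ t)⁻¹ := eq_inv_of_mul_eq_one_right hxx
  have hxa' : (ξ t)⁻¹ - (starRingEnd ℂ) (g₁ t) ≠ 0 := by
    rw [← hy, ← map_sub]
    exact fun h => hxa (by simpa using congrArg (starRingEnd ℂ) h)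
  have hxb' : (ξ t)⁻¹ - (starRingEnd ℂ) (g₂ t) ≠ 0 := by
    rw [← hy, ← map_sub]
    exact fun h => hxb (by simpa using congrArg (starRingEnd ℂ) h)
  have hab' : (starRingEnd ℂ) (g₁ t) - (starRingEnd ℂ) (g₂ t) ≠ 0 := by
    rw [← map_sub]
    exact fun h => hab (by simpa using congrArg (starRingEnd ℂ) h)
  have hM0 : 1 - (starRingEnd ℂ) (g₁ t) * g₂ t ≠ 0 := by
    intro h
    apply hN0
    have h2 := congrArg (starRingEnd ℂ) h
    simpa [map_sub, map_mul, mul_comm] using h2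
  have e1 : (ξ t)⁻¹ - (starRingEnd ℂ) (g₁ t)
      = (ξ t)⁻¹ * (1 - (starRingEnd ℂ) (g₁ t) * ξ t) := by
    field_simp
  have e2 : (ξ t)⁻¹ - (starRingEnd ℂ) (g₂ t)
      = (ξ t)⁻¹ * (1 - (starRingEnd ℂ) (g₂ t) * ξ t) := by
    field_simp
  have e1p : (ξ t)⁻¹ + (starRingEnd ℂ) (g₁ t)
      = (ξ t)⁻¹ * (1 + (starRingEnd ℂ) (g₁ t) * ξ t) := by
    field_simp
  have e2p : (ξ t)⁻¹ + (starRingEnd ℂ) (g₂ t)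
      = (ξ t)⁻¹ * (1 + (starRingEnd ℂ) (g₂ t) * ξ t) := by
    field_simp
  have h1a : 1 - (starRingEnd ℂ) (g₁ t) * ξ t ≠ 0 := by
    intro h; apply hxa'; rw [e1, h, mul_zero]
  have h1b : 1 - (starRingEnd ℂ) (g₂ t) * ξ t ≠ 0 := by
    intro h; apply hxb'; rw [e2, h, mul_zero]
  have hQ1' : ((ξ t)⁻¹ + (starRingEnd ℂ) (g₁ t)) / ((ξ t)⁻¹ - (starRingEnd ℂ) (g₁ t))
      = (1 + (starRingEnd ℂ) (g₁ t) * ξ t) / (1 - (starRingEnd ℂ) (g₁ t) * ξ t) := by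
    rw [e1p, e1, mul_div_mul_left _ _ (inv_ne_zero hx0)]
  have hQ2' : ((ξ t)⁻¹ + (starRingEnd ℂ) (g₂ t)) / ((ξ t)⁻¹ - (starRingEnd ℂ) (g₂ t))
      = (1 + (starRingEnd ℂ) (g₂ t) * ξ t) / (1 - (starRingEnd ℂ) (g₂ t) * ξ t) := by
    rw [e2p, e2, mul_div_mul_left _ _ (inv_ne_zero hx0)]
  have f1 : 1 - g₁ t * (ξ t)⁻¹ = (ξ t)⁻¹ * (ξ t - g₁ t) := by
    field_simp
  have f2 : 1 - g₂ t * (ξ t)⁻¹ = (ξ t)⁻¹ * (ξ t - g₂ t) := by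
    field_simp
  have f1p : 1 + g₁ t * (ξ t)⁻¹ = (ξ t)⁻¹ * (ξ t + g₁ t) := by
    field_simp
  have f2p : 1 + g₂ t * (ξ t)⁻¹ = (ξ t)⁻¹ * (ξ t + g₂ t) := by
    field_simp
  have hR1 : (1 + g₁ t * (ξ t)⁻¹) / (1 - g₁ t * (ξ t)⁻¹) = (ξ t + g₁ t) / (ξ t - g₁ t) := by
    rw [f1p, f1, mul_div_mul_left _ _ (inv_ne_zero hx0)]
  have hR2 : (1 + g₂ t * (ξ t)⁻¹) / (1 - g₂ t * (ξ t)⁻¹) = (ξ t + g₂ t) / (ξ t - g₂ t) := by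
    rw [f2p, f2, mul_div_mul_left _ _ (inv_ne_zero hx0)]
  -- derivatives
  set d₁ := g₁ t * ((ξ t + g₁ t) / (ξ t - g₁ t)) with hd1def
  set d₂ := g₂ t * ((ξ t + g₂ t) / (ξ t - g₂ t)) with hd2def
  have hconj : HasDerivAt (fun s => (starRingEnd ℂ) (g₂ s)) ((starRingEnd ℂ) d₂) t :=
    (hd₂ t ht).star
  have hN : HasDerivAt (fun s => 1 - g₁ s * (starRingEnd ℂ) (g₂ s))
      (-(d₁ * (starRingEnd ℂ) (g₂ t) + g₁ t * (starRingEnd ℂ) d₂)) t := by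
    simpa using (hasDerivAt_const t (1 : ℂ)).fun_sub ((hd₁ t ht).fun_mul hconj)
  have hD : HasDerivAt (fun s => g₁ s - g₂ s) (d₁ - d₂) t := (hd₁ t ht).sub (hd₂ t ht)
  have hf := hN.fun_div hD hab
  have hfne : (1 - g₁ t * (starRingEnd ℂ) (g₂ t)) / (g₁ t - g₂ t) ≠ 0 :=
    div_ne_zero hN0 hab
  have hf' := hasDerivAt_log_abs hf hfne
  refine hf'.congr_deriv ?_
  -- algebra
  set N := 1 - g₁ t * (starRingEnd ℂ) (g₂ t) with hNdef
  set D := g₁ t - g₂ t with hDdef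
  set N' := -(d₁ * (starRingEnd ℂ) (g₂ t) + g₁ t * (starRingEnd ℂ) d₂) with hN'def
  set D' := d₁ - d₂ with hD'def
  have hZ : (N' * D - N * D') / D ^ 2 / (N / D) = N' / N - D' / D := by
    field_simp
  rw [hZ]
  set P₁ := (ξ t + g₁ t) / (ξ t - g₁ t) with hP1def
  set P₂ := (ξ t + g₂ t) / (ξ t - g₂ t) with hP2def
  set Z := N' / N - D' / D with hZdef
  have key : Z + (starRingEnd ℂ) Z
      = -((P₁ + (starRingEnd ℂ) P₁) * (P₂ + (starRingEnd ℂ) P₂)) / 2 := by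
    rw [hZdef, hN'def, hD'def, hNdef, hDdef, hd1def, hd2def, hP1def, hP2def]
    simp only [map_div₀, map_sub, map_add, map_mul, map_one, map_neg,
      Complex.conj_conj, hy, hQ1', hQ2', hR1, hR2]
    linear_combination
      half_identity (ξ t) (g₁ t) (g₂ t) ((starRingEnd ℂ) (g₂ t)) hxa hxb hab h1b hN0
        + half_identity' (ξ t) ((starRingEnd ℂ) (g₁ t)) (g₂ t) ((starRingEnd ℂ) (g₂ t))
            hxb hab' h1a h1b hM0
  rw [Complex.add_conj, Complex.add_conj, Complex.add_conj] at key
  have key2 : (2 * Z.re : ℝ) = -((2 * P₁.re) * (2 * P₂.re)) / 2 := by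
    exact_mod_cast key
  linarith
end

section
/- First $\mathrm{SLE}_0$ observable. Let $I\subseteq\mathbb{R}$ be an interval and let $u_0, u_1 : I \to \mathbb{C}$ be differentiable with $u_0(t)\notin\{0,1\}$ and $u_1(t)\ne 0$ for all $t$, satisfying $u_0'(t) = u_0(t)\,\dfrac{1+u_0(t)}{1-u_0(t)}$ and $u_1'(t) = \left(\dfrac{2}{(1-u_0(t))^2} - 1\right) u_1(t)$. Then the function $t \mapsto e^{t}\,\dfrac{(1-u_0(t))^2\,u_1(t)^2}{u_0(t)^{3}}$ is constant on $I$. (Consequently $\arg\big[(1-w)w^{-3/2}w'\big]$ is invariant under the flow, i.e., it is an $\mathrm{SLE}_0$ observable.) -/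
private lemma hasDerivAt_fun_pow {f : ℝ → ℂ} {f' : ℂ} {t : ℝ} (n : ℕ)
    (hf : HasDerivAt f f' t) :
    HasDerivAt (fun y => f y ^ n) ((n : ℂ) * f t ^ (n - 1) * f') t := by
  exact hf.pow n


/-- First SLE₀ observable: along the radial Loewner flow at κ = 0
(`u₀ = w_t(z)`, `u₁ = w_t'(z)`), the quantity `e^t (1-u₀)² u₁² / u₀³` is constant;
hence `arg[(1-w) w^{-3/2} w']` is an SLE₀ observable. -/
theorem sle0_first_observable (I : Set ℝ) (hI : I.OrdConnected) (u₀ u₁ : ℝ → ℂ)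
    (h₀ : ∀ t ∈ I, u₀ t ≠ 0 ∧ u₀ t ≠ 1)
    (h₁ : ∀ t ∈ I, u₁ t ≠ 0)
    (hd₀ : ∀ t ∈ I, HasDerivAt u₀ (u₀ t * ((1 + u₀ t) / (1 - u₀ t))) t)
    (hd₁ : ∀ t ∈ I, HasDerivAt u₁ ((2 / (1 - u₀ t) ^ 2 - 1) * u₁ t) t) :
    ∀ s ∈ I, ∀ t ∈ I,
      (Real.exp s : ℂ) * ((1 - u₀ s) ^ 2 * (u₁ s) ^ 2 / (u₀ s) ^ 3) =
      (Real.exp t : ℂ) * ((1 - u₀ t) ^ 2 * (u₁ t) ^ 2 / (u₀ t) ^ 3) := by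
  set F : ℝ → ℂ := fun t => (Real.exp t : ℂ) * ((1 - u₀ t) ^ 2 * (u₁ t) ^ 2 / (u₀ t) ^ 3)
    with hF
  have key : ∀ t ∈ I, HasDerivAt F 0 t := by
    intro t ht
    obtain ⟨hA0, hA1⟩ := h₀ t ht
    have hB := h₁ t ht
    have h1A : (1 : ℂ) - u₀ t ≠ 0 := sub_ne_zero.mpr (Ne.symm hA1)
    have hA3 : (u₀ t) ^ 3 ≠ 0 := pow_ne_zero _ hA0
    have he : HasDerivAt (fun t => (Real.exp t : ℂ)) (Real.exp t : ℂ) t :=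
      (Real.hasDerivAt_exp t).ofReal_comp
    have hnum := (hasDerivAt_fun_pow 2 ((hasDerivAt_const (𝕜 := ℝ) t (1:ℂ)).sub (hd₀ t ht))).mul
      (hasDerivAt_fun_pow 2 (hd₁ t ht))
    have hden := hasDerivAt_fun_pow 3 (hd₀ t ht)
    have hFd := he.mul (hnum.div hden hA3)
    refine HasDerivAt.congr_deriv hFd ?_
    simp only [Pi.mul_apply, Pi.div_apply, Pi.sub_apply]
    push_cast
    field_simp
    ring
  intro s hs t ht
  -- reduce to s ≤ t
  have main : ∀ a ∈ I, ∀ b ∈ I, a ≤ b → F b = F a := by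
    intro a ha b hb hab
    have hsub : Set.Icc a b ⊆ I := hI.out ha hb
    have hcont : ContinuousOn F (Set.Icc a b) := fun x hx =>
      (key x (hsub hx)).continuousAt.continuousWithinAt
    have hderiv : ∀ x ∈ Set.Ico a b, HasDerivWithinAt F 0 (Set.Ici x) x := fun x hx =>
      (key x (hsub ⟨hx.1, hx.2.le⟩)).hasDerivWithinAt
    exact constant_of_has_deriv_right_zero hcont hderiv b ⟨hab, le_refl b⟩
  rcases le_total s t with h | h
  · exact (main s hs t ht h).symm
  · exact main t ht s hs h
end

section
/- Second $\mathrm{SLE}_0$ observable. Let $I\subseteq\mathbb{R}$ be an interval and let $u_0, u_1, u_2, u_3 : I \to \mathbb{C}$ be differentiable with $u_0(t)\notin\{0,1\}$ and $u_1(t)\ne 0$ for all $t$, satisfying $u_0' = v(u_0)$, $u_1' = v'(u_0)u_1$, $u_2' = v''(u_0)u_1^2 + v'(u_0)u_2$, and $u_3' = v'''(u_0)u_1^3 + 3v''(u_0)u_1u_2 + v'(u_0)u_3$, where $v(u) = u\dfrac{1+u}{1-u}$, $v'(u) = \dfrac{2}{(1-u)^2}-1$, $v''(u) = \dfrac{4}{(1-u)^3}$,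 $v'''(u) = \dfrac{12}{(1-u)^4}$. Then the function $t \mapsto \dfrac{u_3(t)}{u_1(t)} - \dfrac{3}{2}\left(\dfrac{u_2(t)}{u_1(t)}\right)^2 + \dfrac{3}{8}\,\dfrac{u_1(t)^2}{u_0(t)^2}\left(1 - \dfrac{4\,u_0(t)}{(1-u_0(t))^2}\right)$ is constant on $I$. -/
lemma hasDerivAt_sq' {f : ℝ → ℂ} {f' : ℂ} {t : ℝ} (hf : HasDerivAt f f' t) :
    HasDerivAt (fun y => f y ^ 2) (2 * f t * f') t := by
  have h := hf.mul hf
  have he : (fun y => f y ^ 2) = fun y => f y * f y := by ext y; ring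
  rw [he]
  refine h.congr_deriv ?_
  ring

set_option maxHeartbeats 1600000 in
/-- Second SLE₀ observable: with `u_k = ∂_z^k w_t(z)` evolving under
the radial Loewner flow at κ = 0 (vector field `v(u) = u (1+u)/(1-u)`), the quantity
`u₃/u₁ - (3/2)(u₂/u₁)² + (3/8)(u₁²/u₀²)(1 - 4u₀/(1-u₀)²)`, i.e.
`S_w + (3/8)(w'/w)²(1 - 4w/(1-w)²)`, is constant. -/
theorem sle0_second_observable (I : Set ℝ) (hI : I.OrdConnected)
    (u₀ u₁ u₂ u₃ : ℝ → ℂ)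
    (h₀ : ∀ t ∈ I, u₀ t ≠ 0 ∧ u₀ t ≠ 1)
    (h₁ : ∀ t ∈ I, u₁ t ≠ 0)
    (hd₀ : ∀ t ∈ I, HasDerivAt u₀ (u₀ t * ((1 + u₀ t) / (1 - u₀ t))) t)
    (hd₁ : ∀ t ∈ I, HasDerivAt u₁ ((2 / (1 - u₀ t) ^ 2 - 1) * u₁ t) t)
    (hd₂ : ∀ t ∈ I, HasDerivAt u₂
      ((4 / (1 - u₀ t) ^ 3) * (u₁ t) ^ 2 + (2 / (1 - u₀ t) ^ 2 - 1) * u₂ t) t)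
    (hd₃ : ∀ t ∈ I, HasDerivAt u₃
      ((12 / (1 - u₀ t) ^ 4) * (u₁ t) ^ 3 + 3 * (4 / (1 - u₀ t) ^ 3) * u₁ t * u₂ t
        + (2 / (1 - u₀ t) ^ 2 - 1) * u₃ t) t) :
    ∀ s ∈ I, ∀ t ∈ I,
      u₃ s / u₁ s - (3/2) * (u₂ s / u₁ s) ^ 2
          + (3/8) * ((u₁ s) ^ 2 / (u₀ s) ^ 2) * (1 - 4 * u₀ s / (1 - u₀ s) ^ 2) =
      u₃ t / u₁ t - (3/2) * (u₂ t / u₁ t) ^ 2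
          + (3/8) * ((u₁ t) ^ 2 / (u₀ t) ^ 2) * (1 - 4 * u₀ t / (1 - u₀ t) ^ 2) := by
  set F : ℝ → ℂ := fun t => u₃ t / u₁ t - (3/2) * (u₂ t / u₁ t) ^ 2
      + (3/8) * ((u₁ t) ^ 2 / (u₀ t) ^ 2) * (1 - 4 * u₀ t / (1 - u₀ t) ^ 2) with hF
  have key : ∀ t ∈ I, HasDerivAt F 0 t := by
    intro t ht
    obtain ⟨ha0, ha1⟩ := h₀ t ht
    have hb := h₁ t ht
    have hsub : (1 : ℂ) - u₀ t ≠ 0 := sub_ne_zero.mpr (Ne.symm ha1)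
    have H1 := (hd₃ t ht).div (hd₁ t ht) hb
    have H2 := (hasDerivAt_sq' ((hd₂ t ht).div (hd₁ t ht) hb)).const_mul ((3:ℂ)/2)
    have H3 := (hasDerivAt_sq' (hd₁ t ht)).div (hasDerivAt_sq' (hd₀ t ht)) (pow_ne_zero 2 ha0)
    have H4 := (((hd₀ t ht).const_mul (4:ℂ)).div
        (hasDerivAt_sq' ((hasDerivAt_const t (1:ℂ)).sub (hd₀ t ht))) (pow_ne_zero 2 hsub)).const_sub 1
    obtain ⟨e, he⟩ : ∃ e : ℂ, e = 1 - u₀ t := ⟨_, rfl⟩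
    have hsub' : e ≠ 0 := he ▸ hsub
    have hi : e * e⁻¹ = 1 := mul_inv_cancel₀ hsub'
    have hj : u₀ t * (u₀ t)⁻¹ = 1 := mul_inv_cancel₀ ha0
    have hk : u₁ t * (u₁ t)⁻¹ = 1 := mul_inv_cancel₀ hb
    have H1' : HasDerivAt (fun y => u₃ y / u₁ y)
        (12 / (1 - u₀ t) ^ 4 * u₁ t ^ 2 + 12 / (1 - u₀ t) ^ 3 * u₂ t) t := by
      refine H1.congr_deriv ?_
      symm
      rw [← he]
      linear_combination (-12 * u₂ t * e⁻¹ ^ 3 + -12 * u₁ t * u₂ t * e⁻¹ ^ 3 * (u₁ t)⁻¹ + -12 * u₁ t ^ 2 * e⁻¹ ^ 4 + -12 * u₁ t ^ 3 * e⁻¹ ^ 4 * (u₁ t)⁻¹) * hk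
    have H2' : HasDerivAt (fun y => (3:ℂ)/2 * (u₂ y / u₁ y) ^ 2)
        (12 / (1 - u₀ t) ^ 3 * u₂ t) t := by
      refine H2.congr_deriv ?_
      symm
      simp only [Pi.div_apply, Pi.sub_apply]
      rw [← he]
      linear_combination (-12 * u₂ t * e⁻¹ ^ 3 + -12 * u₁ t * u₂ t * e⁻¹ ^ 3 * (u₁ t)⁻¹ + -12 * u₁ t ^ 2 * u₂ t * e⁻¹ ^ 3 * (u₁ t)⁻¹ ^ 2) * hk
    have H3' : HasDerivAt
        (fun y => (3:ℂ)/8 * (u₁ y ^ 2 / u₀ y ^ 2) * (1 - 4 * u₀ y / (1 - u₀ y) ^ 2))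
        (-(12 / (1 - u₀ t) ^ 4 * u₁ t ^ 2)) t := by
      refine ((H3.const_mul ((3:ℂ)/8)).mul H4).congr_deriv ?_
      symm
      simp only [Pi.div_apply, Pi.sub_apply]
      rw [← he]
      linear_combination ((3/4) * u₁ t ^ 2 * e⁻¹ * (u₀ t)⁻¹ ^ 2 + (3/2) * u₁ t ^ 2 * e⁻¹ ^ 2 * (u₀ t)⁻¹ ^ 2 + (-9/2) * u₁ t ^ 2 * e⁻¹ ^ 3 * (u₀ t)⁻¹ + 3 * u₁ t ^ 2 * e⁻¹ ^ 4 + -6 * u₁ t ^ 2 * e⁻¹ ^ 4 * (u₀ t)⁻¹) * he + ((-3/4) * u₁ t ^ 2 * (u₀ t)⁻¹ ^ 2 + (-3/2) * u₁ t ^ 2 * e⁻¹ * (u₀ t)⁻¹ ^ 2 + (9/2) * u₁ t ^ 2 * e⁻¹ ^ 2 * (u₀ t)⁻¹ + -3 * u₁ t ^ 2 * e⁻¹ ^ 3 + 6 * u₁ t ^ 2 * e⁻¹ ^ 3 * (u₀ t)⁻¹ + (3/2) * u₀ t * u₁ t ^ 2 * e⁻¹ ^ 3 * (u₀ t)⁻¹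 ^ 2 + (3/2) * u₀ t * u₁ t ^ 2 * e * e⁻¹ ^ 4 * (u₀ t)⁻¹ ^ 2 + (3/2) * u₀ t ^ 2 * u₁ t ^ 2 * e⁻¹ ^ 3 * (u₀ t)⁻¹ ^ 2 + 3 * u₀ t ^ 2 * u₁ t ^ 2 * e⁻¹ ^ 4 * (u₀ t)⁻¹ ^ 2 + (3/2) * u₀ t ^ 2 * u₁ t ^ 2 * e * e⁻¹ ^ 4 * (u₀ t)⁻¹ ^ 2 + 3 * u₀ t ^ 3 * u₁ t ^ 2 * e⁻¹ ^ 4 * (u₀ t)⁻¹ ^ 2) * hi + ((3/4) * u₁ t ^ 2 * (u₀ t)⁻¹ ^ 2 + (3/4) * u₁ t ^ 2 * e⁻¹ * (u₀ t)⁻¹ ^ 2 + (-9/2) * u₁ t ^ 2 * e⁻¹ ^ 2 * (u₀ t)⁻¹ + (-3/2) * u₁ t ^ 2 * e⁻¹ ^ 2 * (u₀ t)⁻¹ ^ 2 + 3 * u₁ t ^ 2 * e⁻¹ ^ 3 + (-3/2) * u₁ t ^ 2 * e⁻¹ ^ 3 * (u₀ t)⁻¹ + 9 * u₁ t ^ 2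 * e⁻¹ ^ 4 + 6 * u₁ t ^ 2 * e⁻¹ ^ 4 * (u₀ t)⁻¹ + (3/4) * u₀ t * u₁ t ^ 2 * (u₀ t)⁻¹ ^ 3 + (3/4) * u₀ t * u₁ t ^ 2 * e⁻¹ * (u₀ t)⁻¹ ^ 2 + (3/4) * u₀ t * u₁ t ^ 2 * e⁻¹ * (u₀ t)⁻¹ ^ 3 + -3 * u₀ t * u₁ t ^ 2 * e⁻¹ ^ 2 * (u₀ t)⁻¹ ^ 2 + (-3/2) * u₀ t * u₁ t ^ 2 * e⁻¹ ^ 2 * (u₀ t)⁻¹ ^ 3 + (-3/2) * u₀ t * u₁ t ^ 2 * e⁻¹ ^ 3 * (u₀ t)⁻¹ + -3 * u₀ t * u₁ t ^ 2 * e⁻¹ ^ 3 * (u₀ t)⁻¹ ^ 2 + 3 * u₀ t * u₁ t ^ 2 * e⁻¹ ^ 4 + 3 * u₀ t * u₁ t ^ 2 * e⁻¹ ^ 4 * (u₀ t)⁻¹ + 6 * u₀ t * u₁ t ^ 2 * e⁻¹ ^ 4 * (u₀ t)⁻¹ ^ 2 + (3/4) * u₀ t ^ 2 * u₁ t ^ 2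 * e⁻¹ * (u₀ t)⁻¹ ^ 3 + -3 * u₀ t ^ 2 * u₁ t ^ 2 * e⁻¹ ^ 2 * (u₀ t)⁻¹ ^ 3 + -3 * u₀ t ^ 2 * u₁ t ^ 2 * e⁻¹ ^ 3 * (u₀ t)⁻¹ ^ 2 + -3 * u₀ t ^ 2 * u₁ t ^ 2 * e⁻¹ ^ 3 * (u₀ t)⁻¹ ^ 3 + 3 * u₀ t ^ 2 * u₁ t ^ 2 * e⁻¹ ^ 4 * (u₀ t)⁻¹ + 6 * u₀ t ^ 2 * u₁ t ^ 2 * e⁻¹ ^ 4 * (u₀ t)⁻¹ ^ 3 + -3 * u₀ t ^ 3 * u₁ t ^ 2 * e⁻¹ ^ 3 * (u₀ t)⁻¹ ^ 3) * hj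
    have H := (H1'.sub H2').add H3'
    refine H.congr_deriv ?_
    ring
  intro s hs t ht
  show F s = F t
  rcases le_total s t with h | h
  · have := constant_of_has_deriv_right_zero (f := F) (a := s) (b := t)
      (fun x hx => ((key x (hI.out hs ht hx)).continuousAt.continuousWithinAt))
      (fun x hx => (key x (hI.out hs ht (Set.Ico_subset_Icc_self hx))).hasDerivWithinAt)
    exact (this t (Set.right_mem_Icc.mpr h)).symm
  · have := constant_of_has_deriv_right_zero (f := F) (a := t) (b := s)
      (fun x hx => ((key x (hI.out ht hs hx)).continuousAt.continuousWithinAt))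
      (fun x hx => (key x (hI.out ht hs (Set.Ico_subset_Icc_self hx))).hasDerivWithinAt)
    exact this s (Set.right_mem_Icc.mpr h)
end

section
/- Let $a, b \in \mathbb{C}$ and define $j(z) := \dfrac{ia}{1-z} + \left(\dfrac{ia}{2} - ib\right)\dfrac{1}{z}$ for $z \in \mathbb{C}\setminus\{0,1\}$. Then for all $z \in \mathbb{C}\setminus\{0,1\}$: $-\dfrac{1}{2}\,j(z)^2 + ib\,j'(z) \;=\; \dfrac{h_{1,2}}{z(1-z)^2} + \dfrac{h_{0,1/2}}{z^2}$, where $h_{1,2} = \dfrac{a^2}{2} - ab$ and $h_{0,1/2} = \dfrac{a^2}{8} - \dfrac{b^2}{2}$. -/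
/-- With `j(z) = ia/(1-z) + (ia/2 - ib)/z`, one has
`-(1/2) j(z)² + i b j'(z) = h_{1,2} / (z(1-z)²) + h_{0,1/2} / z²`
where `h_{1,2} = a²/2 - ab` and `h_{0,1/2} = a²/8 - b²/2`. -/
theorem one_point_virasoro (a b : ℂ) :
    ∀ z : ℂ, z ≠ 0 → z ≠ 1 →
      -(1 / 2) * (Complex.I * a / (1 - z) + (Complex.I * a / 2 - Complex.I * b) / z) ^ 2
        + Complex.I * b *
          deriv (fun y : ℂ => Complex.I * a / (1 - y) + (Complex.I * a / 2 - Complex.I * b) / y) z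
      = (a ^ 2 / 2 - a * b) / (z * (1 - z) ^ 2) + (a ^ 2 / 8 - b ^ 2 / 2) / z ^ 2 := by
  intro z hz hz1
  have h1 : (1 : ℂ) - z ≠ 0 := sub_ne_zero.mpr (Ne.symm hz1)
  have hd : HasDerivAt (fun y : ℂ => Complex.I * a / (1 - y) + (Complex.I * a / 2 - Complex.I * b) / y)
      (Complex.I * a / (1 - z) ^ 2 - (Complex.I * a / 2 - Complex.I * b) / z ^ 2) z := by
    have hA : HasDerivAt (fun y : ℂ => Complex.I * a / (1 - y))
        (Complex.I * a / (1 - z) ^ 2) z := by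
      have h := (((hasDerivAt_id z).const_sub (1 : ℂ)).inv h1).const_mul (Complex.I * a)
      have e : ∀ y : ℂ, Complex.I * a * (1 - y)⁻¹ = Complex.I * a / (1 - y) := fun y => by
        rw [div_eq_mul_inv]
      simp only [Pi.inv_apply, id_eq, e] at h
      refine h.congr_deriv ?_
      ring
    have hB : HasDerivAt (fun y : ℂ => (Complex.I * a / 2 - Complex.I * b) / y)
        (-((Complex.I * a / 2 - Complex.I * b) / z ^ 2)) z := by
      have h := ((hasDerivAt_id z).inv hz).const_mul (Complex.I * a / 2 - Complex.I * b)
      have e : ∀ y : ℂ, (Complex.I * a / 2 - Complex.I * b) * y⁻¹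
          = (Complex.I * a / 2 - Complex.I * b) / y := fun y => by rw [div_eq_mul_inv]; ring
      simp only [id_eq, Pi.inv_apply, e] at h
      refine h.congr_deriv ?_
      ring
    simpa [sub_eq_add_neg, Pi.add_def] using hA.add hB
  rw [hd.deriv]
  have key : -(1 / 2) * (Complex.I * a / (1 - z) + (Complex.I * a / 2 - Complex.I * b) / z) ^ 2
        + Complex.I * b * (Complex.I * a / (1 - z) ^ 2 - (Complex.I * a / 2 - Complex.I * b) / z ^ 2)
      = (1 / 2) * (a / (1 - z) + (a / 2 - b) / z) ^ 2
        - b * (a / (1 - z) ^ 2 - (a / 2 - b) / z ^ 2) := by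
    have h2 : Complex.I ^ 2 = -1 := Complex.I_sq
    calc -(1 / 2) * (Complex.I * a / (1 - z) + (Complex.I * a / 2 - Complex.I * b) / z) ^ 2
        + Complex.I * b * (Complex.I * a / (1 - z) ^ 2 - (Complex.I * a / 2 - Complex.I * b) / z ^ 2)
        = Complex.I ^ 2 * (-(1 / 2) * (a / (1 - z) + (a / 2 - b) / z) ^ 2
            + b * (a / (1 - z) ^ 2 - (a / 2 - b) / z ^ 2)) := by ring
      _ = _ := by rw [h2]; ring
  rw [key]
  have hzz : (1 - z) * z ≠ 0 := mul_ne_zero h1 hz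
  have hD1 : ((1 - z) * z) ^ 2 * 2 ≠ 0 := mul_ne_zero (pow_ne_zero _ hzz) two_ne_zero
  have hD2 : (1 - z) ^ 2 * z ^ 2 ≠ 0 := mul_ne_zero (pow_ne_zero _ h1) (pow_ne_zero _ hz)
  have e1 : a / (1 - z) + (a / 2 - b) / z = (a * z + (a / 2 - b) * (1 - z)) / ((1 - z) * z) := by
    rw [div_add_div _ _ h1 hz]; ring_nf
  have e2 : a / (1 - z) ^ 2 - (a / 2 - b) / z ^ 2
      = (a * z ^ 2 - (a / 2 - b) * (1 - z) ^ 2) / ((1 - z) ^ 2 * z ^ 2) := by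
    rw [div_sub_div _ _ (pow_ne_zero 2 h1) (pow_ne_zero 2 hz)]; ring_nf
  rw [e1, e2, div_pow, one_div, inv_mul_eq_div, div_div, mul_div_assoc',
    div_sub_div _ _ hD1 hD2,
    div_add_div _ _ (mul_ne_zero hz (pow_ne_zero 2 h1)) (pow_ne_zero 2 hz),
    div_eq_div_iff (mul_ne_zero hD1 hD2) (mul_ne_zero (mul_ne_zero hz (pow_ne_zero 2 h1)) (pow_ne_zero 2 hz))]
  ring
end

section
/- BPZ-Cardy equation for the one-point function of the Virasoro field. Let $\kappa > 0$, set $h_{1,2} = \dfrac{6-\kappa}{2\kappa}$, $h_{0,1/2} = \dfrac{(6-\kappa)(\kappa-2)}{16\kappa}$, $c = \dfrac{(3\kappa-8)(6-\kappa)}{2\kappa}$, and define $R(z) := \dfrac{h_{1,2}}{z(1-z)^2} + \dfrac{h_{0,1/2}}{z^2}$. Then for every $z \in \mathbb{C}\setminus\{0,1\}$: $\dfrac{\kappa}{2}\big(z^2 R''(z) + 5z R'(z) + 4R(z)\big) \;=\; z\,\dfrac{1+z}{1-z}\,R'(z) + 2\,\dfrac{1+2z-z^2}{(1-z)^2}\,R(z)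 + \dfrac{c}{(1-z)^4}$. -/
set_option maxHeartbeats 1000000

/-- The one-point function of the Virasoro field under the one-leg insertion, in the
`(𝔻,1,0)`-uniformization: `R(z) = h_{1,2}/(z(1-z)²) + h_{0,1/2}/z²` with
`h_{1,2} = (6-κ)/(2κ)` and `h_{0,1/2} = (6-κ)(κ-2)/(16κ)`. -/
noncomputable def virasoroOnePoint (κ : ℝ) (z : ℂ) : ℂ :=
  (((6 - κ) / (2 * κ) : ℝ) : ℂ) / (z * (1 - z) ^ 2)
    + (((6 - κ) * (κ - 2) / (16 * κ) : ℝ) : ℂ) / z ^ 2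

lemma aux_hasDerivAt_R (A B : ℂ) (z : ℂ) (hz0 : z ≠ 0) (hz1 : z ≠ 1) :
    HasDerivAt (fun w : ℂ => A / (w * (1 - w) ^ 2) + B / w ^ 2)
      (A * (3 * z - 1) / (z ^ 2 * (1 - z) ^ 3) - 2 * B / z ^ 3) z := by
  have h1 : (1 : ℂ) - z ≠ 0 := sub_ne_zero.mpr (Ne.symm hz1)
  have hg1 : HasDerivAt (fun w : ℂ => w * (1 - w) ^ 2)
      ((1 : ℂ) * (1 - z) ^ 2 + z * (2 * (1 - z) ^ 1 * (0 - 1))) z :=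
    (hasDerivAt_id z).mul (((hasDerivAt_const z (1 : ℂ)).sub (hasDerivAt_id z)).pow 2)
  have hg2 : HasDerivAt (fun w : ℂ => w ^ 2) ((2 : ℕ) * z ^ 1) z := hasDerivAt_pow 2 z
  have hne1 : z * (1 - z) ^ 2 ≠ 0 := mul_ne_zero hz0 (pow_ne_zero _ h1)
  have hne2 : z ^ 2 ≠ 0 := pow_ne_zero _ hz0
  have h := ((hasDerivAt_const z A).div hg1 hne1).add ((hasDerivAt_const z B).div hg2 hne2)
  refine h.congr_deriv ?_
  field_simp
  ring

lemma aux_hasDerivAt_D1 (A B : ℂ) (z : ℂ) (hz0 : z ≠ 0) (hz1 : z ≠ 1) :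
    HasDerivAt (fun w : ℂ => A * (3 * w - 1) / (w ^ 2 * (1 - w) ^ 3) - 2 * B / w ^ 3)
      (A * (12 * z ^ 2 - 8 * z + 2) / (z ^ 3 * (1 - z) ^ 4) + 6 * B / z ^ 4) z := by
  have h1 : (1 : ℂ) - z ≠ 0 := sub_ne_zero.mpr (Ne.symm hz1)
  have hnum : HasDerivAt (fun w : ℂ => A * (3 * w - 1)) (A * 3) z := by
    simpa using (((hasDerivAt_id z).const_mul (3 : ℂ)).sub (hasDerivAt_const z 1)).const_mul A
  have hg1 : HasDerivAt (fun w : ℂ => w ^ 2 * (1 - w) ^ 3)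
      ((2 : ℕ) * z ^ 1 * (1 - z) ^ 3 + z ^ 2 * (3 * (1 - z) ^ 2 * (0 - 1))) z :=
    (hasDerivAt_pow 2 z).mul (((hasDerivAt_const z (1 : ℂ)).sub (hasDerivAt_id z)).pow 3)
  have hg2 : HasDerivAt (fun w : ℂ => w ^ 3) ((3 : ℕ) * z ^ 2) z := hasDerivAt_pow 3 z
  have hne1 : z ^ 2 * (1 - z) ^ 3 ≠ 0 := mul_ne_zero (pow_ne_zero _ hz0) (pow_ne_zero _ h1)
  have hne3 : z ^ 3 ≠ 0 := pow_ne_zero _ hz0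
  have h := (hnum.div hg1 hne1).sub ((hasDerivAt_const z (2 * B)).div hg2 hne3)
  refine h.congr_deriv ?_
  field_simp
  ring

lemma hasDerivAt_virasoroOnePoint (κ : ℝ) (z : ℂ) (hz0 : z ≠ 0) (hz1 : z ≠ 1) :
    HasDerivAt (virasoroOnePoint κ)
      ((((6 - κ) / (2 * κ) : ℝ) : ℂ) * (3 * z - 1) / (z ^ 2 * (1 - z) ^ 3)
        - 2 * (((6 - κ) * (κ - 2) / (16 * κ) : ℝ) : ℂ) / z ^ 3) z :=
  aux_hasDerivAt_R _ _ z hz0 hz1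

lemma bpz_alg (κ : ℝ) (a z w : ℂ) (hw : w = 1 - z) (hz0 : z ≠ 0) (h1 : w ≠ 0) :
    ((κ:ℂ)/2) *
      (z^2 * (a * (12*z^2-8*z+2) / (z^3*w^4) + 6*(a*((κ:ℂ)-2)/8) / z^4)
      + 5*z * (a * (3*z-1) / (z^2*w^3) - 2*(a*((κ:ℂ)-2)/8) / z^3)
      + 4 * (a / (z*w^2) + (a*((κ:ℂ)-2)/8) / z^2))
  = z * ((1+z)/w) * (a * (3*z-1) / (z^2*w^3) - 2*(a*((κ:ℂ)-2)/8) / z^3)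
    + 2 * ((1+2*z-z^2)/w^2) * (a / (z*w^2) + (a*((κ:ℂ)-2)/8) / z^2)
    + (a * (3*(κ:ℂ)-8)) / w^4 := by
  have hu : z * z⁻¹ = 1 := mul_inv_cancel₀ hz0
  have hv : w * w⁻¹ = 1 := mul_inv_cancel₀ h1
  have hzw : z + w = 1 := by rw [hw]; ring
  linear_combination (6*z^3*z⁻¹^2*w⁻¹^4*a*(κ:ℂ) + (-4)*z^2*z⁻¹^2*w⁻¹^4*a*(κ:ℂ) + 6*z^2*z⁻¹*w⁻¹^4*a*(κ:ℂ) + (-3)*z^2*z⁻¹*w⁻¹^4*a + (3/8)*z*z⁻¹^3*a*(κ:ℂ)^2 + (-3/4)*z*z⁻¹^3*a*(κ:ℂ) + 1*z*z⁻¹^2*w⁻¹^4*a*(κ:ℂ) + (1/4)*z*z⁻¹^2*w⁻¹*a*(κ:ℂ) + (-1/2)*z*z⁻¹^2*w⁻¹*a + (-4)*z*z⁻¹*w⁻¹^4*a*(κ:ℂ) + (-2)*z*z⁻¹*w⁻¹^4*a + (15/2)*z*z⁻¹*w⁻¹^3*a*(κ:ℂ) + (1/4)*z*z⁻¹*w⁻¹^2*a*(κ:ℂ)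 + (-1/2)*z*z⁻¹*w⁻¹^2*a + 6*z*w⁻¹^4*a*(κ:ℂ) + (-1)*z*w⁻¹^4*a + (1/4)*z⁻¹^2*w⁻¹*a*(κ:ℂ) + (-1/2)*z⁻¹^2*w⁻¹*a + (-1/4)*z⁻¹^2*a*(κ:ℂ)^2 + (1/2)*z⁻¹^2*a*(κ:ℂ) + 1*z⁻¹*w⁻¹^4*a*(κ:ℂ) + 1*z⁻¹*w⁻¹^4*a + (-5/2)*z⁻¹*w⁻¹^3*a*(κ:ℂ) + (-3/4)*z⁻¹*w⁻¹^2*a*(κ:ℂ) + (3/2)*z⁻¹*w⁻¹^2*a + (1/4)*z⁻¹*w⁻¹*a*(κ:ℂ) + (-1/2)*z⁻¹*w⁻¹*a + (-3)*w⁻¹^4*a*(κ:ℂ) + (-7)*w⁻¹^4*a + 6*w⁻¹^3*a*(κ:ℂ) + (-1)*w⁻¹^3*a) * hu + ((-1/4)*z⁻¹^2*w⁻¹*a*(κ:ℂ) + (1/2)*z⁻¹^2*w⁻¹*a + 1*z⁻¹*w⁻¹^3*a*(κ:ℂ) + (-1)*z⁻¹*w⁻¹^3*a + (-3/2)*z⁻¹*w⁻¹^2*a*(κ:ℂ)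 + (-1)*z⁻¹*w⁻¹^2*a + (-1/4)*z⁻¹*w⁻¹*a*(κ:ℂ) + (1/2)*z⁻¹*w⁻¹*a + (-6)*w⁻¹^3*a*(κ:ℂ) + 1*w⁻¹^3*a) * hv + ((1/4)*z⁻¹^2*w⁻¹^2*a*(κ:ℂ) + (-1/2)*z⁻¹^2*w⁻¹^2*a + (-1)*z⁻¹*w⁻¹^4*a*(κ:ℂ) + 1*z⁻¹*w⁻¹^4*a + (3/2)*z⁻¹*w⁻¹^3*a*(κ:ℂ) + 1*z⁻¹*w⁻¹^3*a + (1/4)*z⁻¹*w⁻¹^2*a*(κ:ℂ) + (-1/2)*z⁻¹*w⁻¹^2*a + 6*w⁻¹^4*a*(κ:ℂ) + (-1)*w⁻¹^4*a) * hzw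

/-- BPZ-Cardy equation for the one-point function of the Virasoro field:
with `R` as above and `c = (3κ-8)(6-κ)/(2κ)`,
`(κ/2)(z²R'' + 5zR' + 4R) = z (1+z)/(1-z) R' + 2 (1+2z-z²)/(1-z)² R + c/(1-z)⁴`. -/
theorem bpz_cardy_one_point (κ : ℝ) (hκ : 0 < κ) (z : ℂ) (hz0 : z ≠ 0) (hz1 : z ≠ 1) :
    ((κ / 2 : ℝ) : ℂ) *
        (z ^ 2 * deriv (deriv (virasoroOnePoint κ)) z
          + 5 * z * deriv (virasoroOnePoint κ) z + 4 * virasoroOnePoint κ z)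
      = z * ((1 + z) / (1 - z)) * deriv (virasoroOnePoint κ) z
        + 2 * ((1 + 2 * z - z ^ 2) / (1 - z) ^ 2) * virasoroOnePoint κ z
        + (((3 * κ - 8) * (6 - κ) / (2 * κ) : ℝ) : ℂ) / (1 - z) ^ 4 := by
  have h1 : (1 : ℂ) - z ≠ 0 := sub_ne_zero.mpr (Ne.symm hz1)
  set A : ℂ := (((6 - κ) / (2 * κ) : ℝ) : ℂ) with hA
  set B : ℂ := (((6 - κ) * (κ - 2) / (16 * κ) : ℝ) : ℂ) with hB
  have hd1 : deriv (virasoroOnePoint κ) z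
      = A * (3 * z - 1) / (z ^ 2 * (1 - z) ^ 3) - 2 * B / z ^ 3 :=
    (hasDerivAt_virasoroOnePoint κ z hz0 hz1).deriv
  have hopen : IsOpen {w : ℂ | w ≠ 0 ∧ w ≠ 1} := by
    have : {w : ℂ | w ≠ 0 ∧ w ≠ 1} = {(0 : ℂ)}ᶜ ∩ {(1 : ℂ)}ᶜ := by
      ext w; simp [Set.mem_inter_iff]
    rw [this]
    exact isOpen_compl_singleton.inter isOpen_compl_singleton
  have hev : deriv (virasoroOnePoint κ) =ᶠ[nhds z]
      (fun w : ℂ => A * (3 * w - 1) / (w ^ 2 * (1 - w) ^ 3) - 2 * B / w ^ 3) :=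
    Filter.eventually_of_mem (hopen.mem_nhds ⟨hz0, hz1⟩)
      (fun w hw => (hasDerivAt_virasoroOnePoint κ w hw.1 hw.2).deriv)
  have hd2 : deriv (deriv (virasoroOnePoint κ)) z
      = A * (12 * z ^ 2 - 8 * z + 2) / (z ^ 3 * (1 - z) ^ 4) + 6 * B / z ^ 4 := by
    rw [hev.deriv_eq]
    exact (aux_hasDerivAt_D1 A B z hz0 hz1).deriv
  have hR : virasoroOnePoint κ z = A / (z * (1 - z) ^ 2) + B / z ^ 2 := rfl
  have hBa : B = A * ((κ : ℂ) - 2) / 8 := by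
    rw [hA, hB]; push_cast; ring
  have hCa : (((3 * κ - 8) * (6 - κ) / (2 * κ) : ℝ) : ℂ) = A * (3 * (κ : ℂ) - 8) := by
    rw [hA]; push_cast; ring
  have hk : ((κ / 2 : ℝ) : ℂ) = (κ : ℂ) / 2 := by push_cast; ring
  rw [hd1, hd2, hR, hBa, hCa, hk]
  exact bpz_alg κ A z (1 - z) rfl hz0 h1
end

section
/- Neutrality is equivalent to vanishing drift for 1-point vertex observables. Let $\kappa > 0$, $a = \sqrt{2/\kappa}$, and let $\sigma, \sigma_*, \sigma_q, \sigma_{q*}$ be real numbers with $\sigma \ne 0$ and $\sigma_* \ne 0$. Define $\alpha = \sigma\sigma_q + \sigma^2$, $\alpha_* = \sigma_*\sigma_{q*} + \sigma_*^2$, $\beta = \dfrac{\sigma_q(\sigma_q - a)}{2} - \dfrac{\sigma(\sigma + a)}{2}$, $\beta_* = \dfrac{\sigma_{q*}(\sigma_{q*} - a)}{2} - \dfrac{\sigma_*(\sigma_* + a)}{2}$, and $D = \alpha + \beta - \alpha_* - \beta_*$. Then the three equations $2\alpha + \sqrt{2\kappa}\,\sigma D = 0$, $2\alpha_* - \sqrt{2\kappa}\,\sigma_*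 D = 0$, and $\alpha + \beta + \alpha_* + \beta_* - \dfrac{\kappa}{2}D^2 = 0$ all hold if and only if the neutrality condition $\sigma + \sigma_* + \sigma_q + \sigma_{q*} = 0$ holds. -/
/-- Neutrality is equivalent to vanishing drift for 1-point rooted
vertex observables: with `a = √(2/κ)` and the exponents
`α = σσ_q + σ²`, `α* = σ*σ_{q*} + σ*²`, `β = σ_q(σ_q - a)/2 - σ(σ + a)/2`,
`β* = σ_{q*}(σ_{q*} - a)/2 - σ*(σ* + a)/2`, `D = α + β - α* - β*`,
the three drift equations hold iff `σ + σ* + σ_q + σ_{q*} = 0`. -/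
theorem neutrality_iff_driftless (κ : ℝ) (hκ : 0 < κ)
    (σ σs σq σqs : ℝ) (hσ : σ ≠ 0) (hσs : σs ≠ 0)
    (a α αs β βs D : ℝ)
    (ha : a = Real.sqrt (2 / κ))
    (hα : α = σ * σq + σ ^ 2)
    (hαs : αs = σs * σqs + σs ^ 2)
    (hβ : β = σq * (σq - a) / 2 - σ * (σ + a) / 2)
    (hβs : βs = σqs * (σqs - a) / 2 - σs * (σs + a) / 2)
    (hD : D = α + β - αs - βs) :
    (2 * α + Real.sqrt (2 * κ) * σ * D = 0 ∧
      2 * αs - Real.sqrt (2 * κ) * σs * D = 0 ∧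
      α + β + αs + βs - κ / 2 * D ^ 2 = 0) ↔
    σ + σs + σq + σqs = 0 := by
  have hκ' : (0:ℝ) < 2 * κ := by linarith
  set s := Real.sqrt (2 * κ) with hs
  have hsa : s * a = 2 := by
    rw [ha, hs, ← Real.sqrt_mul (le_of_lt hκ'),
      show (2 * κ) * (2 / κ) = 4 by field_simp; ring,
      show (4:ℝ) = 2 ^ 2 by norm_num]
    exact Real.sqrt_sq (by norm_num)
  have ha2 : κ * a ^ 2 = 2 := by
    rw [ha, Real.sq_sqrt (by positivity)]; field_simp
  subst hα hαs hβ hβs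
  constructor
  · rintro ⟨h1, h2, -⟩
    have h1' : σ * (2 * (σ + σq) + s * D) = 0 := by linear_combination h1
    have h2' : σs * (2 * (σs + σqs) - s * D) = 0 := by linear_combination h2
    rcases mul_eq_zero.1 h1' with h | h
    · exact absurd h hσ
    rcases mul_eq_zero.1 h2' with h' | h'
    · exact absurd h' hσs
    linarith
  · intro hN
    have hqs : σqs = -(σ + σs + σq) := by linarith
    subst hqs
    have hD' : D = -a * (σ + σq) := by rw [hD]; ring
    subst hD'
    refine ⟨?_, ?_, ?_⟩
    · linear_combination (-(σ * (σ + σq))) * hsa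
    · linear_combination (σs * (σ + σq)) * hsa
    · linear_combination (-((σ + σq) ^ 2) / 2) * ha2
end
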